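/- arXiv:1807.08444 — 2 statements merged into one kernel-verified Lean document; each statement's English description precedes it below -/
import Mathlib

section
/- Define T_{n,q} = ∫₀¹ αⁿ R(α)^q dα where R(α)² = ‖x̂ − y₀ + α v‖² + ε², L = ‖v‖ > 0. Then for every integer n ≥ 1 and real q ≠ −2, the recursion T_{n,q} = [α^{n−1} R(α)^{q+2}/((q+2)L²)]₀¹ − ((n−1)/((q+2)L²)) T_{n−2,q+2} − ((x₀·v)/L²) T_{n−1,q} holds, where the term with T_{n−2,q+2} is absent when n = 1. -/
open scoped RealInnerProductSpace
open intervalIntegral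

/-- The recursion for T_{n,q} = ∫₀¹ αⁿ R(α)^q dα, for n ≥ 1, q ≠ −2.
    (The term with T_{n−2,q+2} carries the coefficient n−1 and is absent for n = 1.) -/
theorem stokeslet_segment_Tnq_recursion
    (y₀ v xhat : EuclideanSpace ℝ (Fin 3)) (ε : ℝ) (hε : 0 < ε)
    (hv : 0 < ‖v‖)
    (x : ℝ → EuclideanSpace ℝ (Fin 3)) (hx : ∀ α, x α = xhat - y₀ + α • v)
    (R : ℝ → ℝ) (hR : ∀ α, R α = Real.sqrt (‖x α‖ ^ 2 + ε ^ 2))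
    (T : ℕ → ℝ → ℝ)
    (hT : ∀ (n : ℕ) (q : ℝ), T n q = ∫ α in (0:ℝ)..1, α ^ n * R α ^ q)
    (n : ℕ) (hn : 1 ≤ n) (q : ℝ) (hq : q ≠ -2) :
    T n q =
      ((1:ℝ) ^ (n - 1) * R 1 ^ (q + 2) - (0:ℝ) ^ (n - 1) * R 0 ^ (q + 2))
          / ((q + 2) * ‖v‖ ^ 2)
        - ((n : ℝ) - 1) / ((q + 2) * ‖v‖ ^ 2) * T (n - 2) (q + 2)
        - ⟪x 0, v⟫ / ‖v‖ ^ 2 * T (n - 1) q := by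
  have hx0 : x 0 = xhat - y₀ := by rw [hx]; simp
  have hxa : ∀ α : ℝ, x α = x 0 + α • v := by intro α; rw [hx, hx0]
  set a : ℝ := ‖v‖ ^ 2 with ha
  set b : ℝ := ⟪x 0, v⟫ with hb
  set g : ℝ → ℝ := fun α => a * α ^ 2 + 2 * b * α + (‖x 0‖ ^ 2 + ε ^ 2) with hgdef
  have hgx : ∀ α : ℝ, ‖x α‖ ^ 2 + ε ^ 2 = g α := by
    intro α
    rw [hxa α]
    rw [@norm_add_sq_real]
    rw [real_inner_smul_right, norm_smul]
    simp only [hgdef, ha, hb, Real.norm_eq_abs, mul_pow, sq_abs]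
    ring
  have hgpos : ∀ α : ℝ, 0 < g α := by
    intro α; rw [← hgx α]; positivity
  have hRg : ∀ (α : ℝ) (s : ℝ), R α ^ s = g α ^ (s / 2) := by
    intro α s
    rw [hR, hgx, Real.sqrt_eq_rpow, ← Real.rpow_mul (hgpos α).le, one_div,
      inv_mul_eq_div]
  have hgc : Continuous g := by fun_prop
  have hcont : ∀ s : ℝ, Continuous fun α => g α ^ s := fun s =>
    hgc.rpow_const fun α => Or.inl (hgpos α).ne'
  have hint : ∀ (m : ℕ) (s : ℝ),
      IntervalIntegrable (fun α => α ^ m * g α ^ s) MeasureTheory.volume 0 1 :=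
    fun m s => ((continuous_pow m).mul (hcont s)).intervalIntegrable _ _
  have hg' : ∀ α : ℝ, HasDerivAt g (2 * a * α + 2 * b) α := by
    intro α
    have h1 : HasDerivAt (fun α : ℝ => a * α ^ 2) (a * (2 * α)) α := by
      simpa using (hasDerivAt_pow 2 α).const_mul a
    have h2 : HasDerivAt (fun α : ℝ => 2 * b * α) (2 * b) α := by
      simpa using (hasDerivAt_id α).const_mul (2 * b)
    have := (h1.add h2).add_const (‖x 0‖ ^ 2 + ε ^ 2)
    refine this.congr_deriv ?_
    ring
  have hn1 : n - 1 + 1 = n := Nat.succ_pred_eq_of_pos hn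
  have hD : ∀ α : ℝ, HasDerivAt (fun t : ℝ => t ^ (n - 1) * g t ^ ((q + 2) / 2))
      ((↑(n - 1) : ℝ) * (α ^ (n - 2) * g α ^ ((q + 2) / 2))
        + ((q + 2) * b) * (α ^ (n - 1) * g α ^ (q / 2))
        + ((q + 2) * a) * (α ^ n * g α ^ (q / 2))) α := by
    intro α
    have hr := (hg' α).rpow_const (p := (q + 2) / 2) (Or.inl (hgpos α).ne')
    have h := (hasDerivAt_pow (n - 1) α).mul hr
    refine h.congr_deriv ?_
    have he : (q + 2) / 2 - 1 = q / 2 := by ring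
    have he2 : n - 1 - 1 = n - 2 := by omega
    have hp : α ^ n = α ^ (n - 1) * α := by
      conv_lhs => rw [← hn1]
      rw [pow_succ]
    rw [he, he2, hp]
    ring
  have hkey := integral_eq_sub_of_hasDerivAt (f := fun t : ℝ => t ^ (n - 1) * g t ^ ((q + 2) / 2))
    (fun α _ => hD α)
    ((((hint (n - 2) ((q + 2) / 2)).const_mul _).add ((hint (n - 1) (q / 2)).const_mul _)).add
      ((hint n (q / 2)).const_mul _))
  rw [integral_add (((hint (n - 2) ((q + 2) / 2)).const_mul _).add
        ((hint (n - 1) (q / 2)).const_mul _)) ((hint n (q / 2)).const_mul _),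
    integral_add ((hint (n - 2) ((q + 2) / 2)).const_mul _) ((hint (n - 1) (q / 2)).const_mul _),
    integral_const_mul, integral_const_mul, integral_const_mul] at hkey
  have hTg : ∀ (m : ℕ) (s : ℝ), T m s = ∫ α in (0:ℝ)..1, α ^ m * g α ^ (s / 2) := by
    intro m s
    rw [hT]
    simp only [hRg]
  rw [← hTg (n - 2) (q + 2), ← hTg (n - 1) q, ← hTg n q] at hkey
  have hcast : ((n - 1 : ℕ) : ℝ) = (n : ℝ) - 1 := by
    push_cast [hn]; ring
  rw [hcast] at hkey
  rw [hRg 1 (q + 2), hRg 0 (q + 2)]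
  have hane : (q + 2) * a ≠ 0 := by
    have : q + 2 ≠ 0 := fun h => hq (by linarith)
    positivity
  have hstep : T n q = ((1:ℝ) ^ (n - 1) * g 1 ^ ((q + 2) / 2)
      - (0:ℝ) ^ (n - 1) * g 0 ^ ((q + 2) / 2)
      - ((n:ℝ) - 1) * T (n - 2) (q + 2) - (q + 2) * b * T (n - 1) q) / ((q + 2) * a) := by
    rw [eq_div_iff hane]
    linear_combination hkey
  rw [hstep]
  have ha0 : a ≠ 0 := by positivity
  have hq2 : q + 2 ≠ 0 := fun h => hq (by linarith)
  field_simp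
end

section
/- The regularized Stokeslet velocity field u(x) = (1/(8πμ)) [ (1/R₀ + ε²/R₀³) f + ((f·x) x)/R₀³ ], where R₀ = √(‖x‖² + ε²), is divergence-free on ℝ³: ∇·u = 0 everywhere. -/
set_option maxHeartbeats 2000000


open scoped BigOperators

/-- The regularized Stokeslet velocity field is divergence-free on ℝ³. -/
theorem regularized_stokeslet_div_free
    (μ ε : ℝ) (hμ : 0 < μ) (hε : 0 < ε) (f : Fin 3 → ℝ)
    (R₀ : (Fin 3 → ℝ) → ℝ)
    (hR : ∀ x, R₀ x = Real.sqrt ((∑ i, x i ^ 2) + ε ^ 2))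
    (u : (Fin 3 → ℝ) → (Fin 3 → ℝ))
    (hu : ∀ x i, u x i = (1 / (8 * Real.pi * μ)) *
        ((1 / R₀ x + ε ^ 2 / R₀ x ^ 3) * f i
          + (∑ j, f j * x j) * x i / R₀ x ^ 3)) :
    ∀ x : Fin 3 → ℝ,
      (∑ i, fderiv ℝ (fun y => u y i) x (Pi.single i 1)) = 0 := by
  intro x
  set c : ℝ := 1 / (8 * Real.pi * μ) with hc
  set s : ℝ := (∑ j, x j ^ 2) + ε ^ 2 with hs
  have hspos : 0 < s := by
    have : 0 ≤ ∑ j, x j ^ 2 := Finset.sum_nonneg fun j _ => sq_nonneg _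
    positivity
  set r : ℝ := Real.sqrt s with hrdef
  have hrpos : 0 < r := Real.sqrt_pos.2 hspos
  have hrne : r ≠ 0 := hrpos.ne'
  have hr2 : r ^ 2 = s := Real.sq_sqrt hspos.le
  -- the CLM derivative of y ↦ ∑ y j ^ 2 + ε ^ 2
  set L : (Fin 3 → ℝ) →L[ℝ] ℝ :=
    ∑ j, ((2 : ℝ) * x j) • (ContinuousLinearMap.proj j : (Fin 3 → ℝ) →L[ℝ] ℝ) with hLdef
  have hP : ∀ j : Fin 3, HasFDerivAt (fun y : Fin 3 → ℝ => y j)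
      (ContinuousLinearMap.proj j : (Fin 3 → ℝ) →L[ℝ] ℝ) x := fun j =>
    (ContinuousLinearMap.proj j : (Fin 3 → ℝ) →L[ℝ] ℝ).hasFDerivAt
  have hLS : HasFDerivAt (fun y : Fin 3 → ℝ => (∑ j, y j ^ 2) + ε ^ 2) L x := by
    have h1 : HasFDerivAt (fun y : Fin 3 → ℝ => ∑ j, y j ^ 2) L x := by
      rw [hLdef]
      apply HasFDerivAt.fun_sum
      intro j _
      have := (hP j).fun_mul (hP j)
      convert this using 1
      · rfl
      · ext y; ring
      · ext v
        simp [two_mul, smul_eq_mul]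
        ring
    simpa using h1.add_const (ε ^ 2)
  set Rf : (Fin 3 → ℝ) → ℝ := fun y => Real.sqrt ((∑ j, y j ^ 2) + ε ^ 2) with hRf_def
  have hRfx : Rf x = r := rfl
  have hRf : HasFDerivAt Rf ((1 / (2 * r)) • L) x := by
    have hsq := Real.hasDerivAt_sqrt hspos.ne'
    have := hsq.comp_hasFDerivAt x hLS
    exact this
  set Lf : (Fin 3 → ℝ) →L[ℝ] ℝ :=
    ∑ j, (f j) • (ContinuousLinearMap.proj j : (Fin 3 → ℝ) →L[ℝ] ℝ) with hLfdef
  have hLf : HasFDerivAt (fun y : Fin 3 → ℝ => ∑ j, f j * y j) Lf x := by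
    rw [hLfdef]
    apply HasFDerivAt.fun_sum
    intro j _
    exact (hP j).const_mul (f j)
  have hr3ne : r ^ 3 ≠ 0 := pow_ne_zero 3 hrne
  -- scalar derivatives at r
  have hg : HasDerivAt (fun t : ℝ => t⁻¹ + ε ^ 2 * (t ^ 3)⁻¹)
      (-1 / r ^ 2 + ε ^ 2 * (-((3:ℕ) * r ^ 2) / (r ^ 3) ^ 2)) r := by
    have h1 := (hasDerivAt_id r).inv hrne
    have h2 := ((hasDerivAt_pow 3 r).inv hr3ne).const_mul (ε ^ 2)
    simpa using h1.fun_add h2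
  have hh := ((hasDerivAt_pow 3 r).inv hr3ne).comp_hasFDerivAt x hRf
  -- main per-coordinate derivative
  have key : ∀ i : Fin 3, fderiv ℝ (fun y => u y i) x (Pi.single i 1) =
      c * (((-1 / r ^ 2 + ε ^ 2 * (-(3 * r ^ 2) / (r ^ 3) ^ 2)) * (x i / r)) * f i
        + (f i * x i + (∑ j, f j * x j)) / r ^ 3
        + (∑ j, f j * x j) * x i * (-(3 * r ^ 2) / (r ^ 3) ^ 2) * (x i / r)) := by
    intro i
    have hA := hg.comp_hasFDerivAt x hRf
    have hB := hA.mul_const (f i)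
    have hC := (hLf.mul (hP i)).mul hh
    have hD := (hB.add hC).const_mul c
    have hfun : (fun y => u y i) =
        (fun y => c * (((fun t : ℝ => t⁻¹ + ε ^ 2 * (t ^ 3)⁻¹) ∘ Rf) y * f i
          + ((∑ j, f j * y j) * y i) * (((fun t : ℝ => (t ^ 3)⁻¹) ∘ Rf) y))) := by
      funext y
      simp only [hu, hR, Function.comp, hRf_def, hc, div_eq_mul_inv, one_div, one_mul]
    have hD' : HasFDerivAt (fun y => c * (((fun t : ℝ => t⁻¹ + ε ^ 2 * (t ^ 3)⁻¹) ∘ Rf) y * f i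
          + ((∑ j, f j * y j) * y i) * (((fun t : ℝ => (t ^ 3)⁻¹) ∘ Rf) y))) _ x := hD
    rw [hfun, hD'.fderiv]
    have hL1 : L (Pi.single i 1) = 2 * x i := by
      rw [hLdef]
      simp [ContinuousLinearMap.sum_apply, Pi.single_apply, Finset.sum_ite_eq']
    have hLf1 : Lf (Pi.single i 1) = f i := by
      rw [hLfdef]
      simp [ContinuousLinearMap.sum_apply, Pi.single_apply, Finset.sum_ite_eq']
    simp only [ContinuousLinearMap.add_apply, ContinuousLinearMap.smul_apply,
      ContinuousLinearMap.proj_apply, smul_eq_mul, hL1, hLf1, hRfx, Pi.single_eq_same,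
      Function.comp, Pi.inv_apply, Pi.mul_apply]
    push_cast
    field_simp
    ring
  simp only [key]
  rw [Fin.sum_univ_three]
  have hsum : (∑ j, x j ^ 2) = x 0 ^ 2 + x 1 ^ 2 + x 2 ^ 2 := by
    rw [Fin.sum_univ_three]
  have hfs : (∑ j, f j * x j) = f 0 * x 0 + f 1 * x 1 + f 2 * x 2 := by
    rw [Fin.sum_univ_three]
  have hr2' : r ^ 2 = x 0 ^ 2 + x 1 ^ 2 + x 2 ^ 2 + ε ^ 2 := by rw [hr2, hs, hsum]
  rw [hfs]
  field_simp
  linear_combination (3 * c * (f 0 * x 0 + f 1 * x 1 + f 2 * x 2)) * hr2'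
end
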